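/- For every integer n ≥ 2, the dimension vector (1^n, n−1; n), consisting of n entries equal to 1 together with one entry equal to n−1 in ambient dimension n, is dense. -/

import Mathlib

noncomputable section

/-- Complex `n × d` matrices of rank `d`, with the subspace topology of the
Euclidean (product) topology on matrices. -/
def FullRankMatrices (n d : ℕ) : Type :=
  {A : Matrix (Fin n) (Fin d) ℂ // A.rank = d}

instance (n d : ℕ) : TopologicalSpace (FullRankMatrices n d) :=
  instTopologicalSpaceSubtype

/-- The Grassmannian `Gr(d; n)` of `d`-dimensional linear subspaces of `ℂ^n`. -/
def Gr (d n : ℕ) : Type :=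
  {U : Submodule ℂ (Fin n → ℂ) // Module.finrank ℂ U = d}

/-- The map sending a rank-`d` matrix to its column span. -/
def colSpan (n d : ℕ) : FullRankMatrices n d → Gr d n :=
  fun A => ⟨LinearMap.range A.1.mulVecLin, A.2⟩

/-- `Gr(d; n)` carries the quotient topology induced by the column-span map. -/
instance (d n : ℕ) : TopologicalSpace (Gr d n) :=
  TopologicalSpace.coinduced (colSpan n d) inferInstance

/-- The linear automorphism of `ℂ^n` associated to an element of `GL(n, ℂ)`. -/
def glEquiv {n : ℕ} (M : GL (Fin n) ℂ) : (Fin n → ℂ) ≃ₗ[ℂ] (Fin n → ℂ) :=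
  LinearMap.GeneralLinearGroup.generalLinearEquiv ℂ (Fin n → ℂ)
    (Matrix.GeneralLinearGroup.toLin M)

/-- The action of `GL(n, ℂ)` on the Grassmannian, `M • U = M(U)`. -/
def glAction {n d : ℕ} (M : GL (Fin n) ℂ) (U : Gr d n) : Gr d n :=
  ⟨U.1.map (glEquiv M).toLinearMap, by
    rw [LinearEquiv.finrank_map_eq]; exact U.2⟩

/-- A dimension vector, recorded as the list `[d_1, …, d_k]` of subspace dimensions
together with the ambient dimension `n`, is dense if some point of
`∏ᵢ Gr(dᵢ; n)` has dense orbit under the diagonal `GL(n, ℂ)`-action. -/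
def DenseDV (d : List ℕ) (n : ℕ) : Prop :=
  ∃ x : ∀ i : Fin d.length, Gr (d.get i) n,
    Dense {y : ∀ i : Fin d.length, Gr (d.get i) n |
      ∃ M : GL (Fin n) ℂ, (fun i => glAction M (x i)) = y}

end


open Module Submodule Set Polynomial Matrix Topology

noncomputable section
namespace DenseAux

def L (m : ℕ) : List ℕ := List.replicate (m+1) 1 ++ [m]

lemma length_L (m : ℕ) : (L m).length = m + 2 := by simp [L]

def emb (m : ℕ) (i : Fin (m+1)) : Fin (L m).length := ⟨i, by rw [length_L]; omega⟩

def lastIdx (m : ℕ) : Fin (L m).length := ⟨m+1, by rw [length_L]; omega⟩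

lemma get_lt (m : ℕ) (i : Fin (L m).length) (h : (i : ℕ) < m + 1) : (L m).get i = 1 := by
  rw [List.get_eq_getElem]
  show (List.replicate (m+1) 1 ++ [m])[(i:ℕ)] = 1
  rw [List.getElem_append_left (by simpa using h)]
  simp

lemma get_lastIdx (m : ℕ) : (L m).get (lastIdx m) = m := by
  rw [List.get_eq_getElem]
  show (List.replicate (m+1) 1 ++ [m])[((lastIdx m : Fin (L m).length) :ℕ)] = m
  rw [List.getElem_append_right (by simp [lastIdx])]
  simp

lemma eq_lastIdx (m : ℕ) (i : Fin (L m).length) (h : ¬ (i : ℕ) < m + 1) : i = lastIdx m := by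
  have hi : (i:ℕ) < m + 2 := by simpa [length_L] using i.2
  exact Fin.ext (show (i:ℕ) = m+1 by omega)

def e (m : ℕ) (i : Fin (m+1)) : Fin (m+1) → ℂ := Pi.single i 1

def w (m : ℕ) (j : Fin m) : Fin (m+1) → ℂ :=
  Pi.single j.castSucc 1 + Pi.single (Fin.last m) 1

lemma e_ne_zero (m : ℕ) (i : Fin (m+1)) : e m i ≠ 0 := by
  intro h
  have := congrFun h i
  simp [e] at this

def φ₀ (m : ℕ) : (Fin (m+1) → ℂ) →ₗ[ℂ] ℂ :=
  LinearMap.proj (Fin.last m) - ∑ k : Fin m, LinearMap.proj k.castSucc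

lemma φ₀_apply (m : ℕ) (x : Fin (m+1) → ℂ) :
    φ₀ m x = x (Fin.last m) - ∑ k : Fin m, x k.castSucc := by
  simp [φ₀]

lemma φ₀_w (m : ℕ) (j : Fin m) : φ₀ m (w m j) = 0 := by
  rw [φ₀_apply]
  simp [w, Pi.single_apply, Fin.castSucc_inj, (Fin.castSucc_lt_last _).ne]

lemma φ₀_e (m : ℕ) (i : Fin (m+1)) : φ₀ m (e m i) ≠ 0 := by
  rw [φ₀_apply]
  induction i using Fin.lastCases with
  | last => simp [e, Pi.single_apply, (Fin.castSucc_lt_last _).ne]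
  | cast k => simp [e, Pi.single_apply, Fin.castSucc_inj, (Fin.castSucc_lt_last _).ne]

lemma w_li (m : ℕ) : LinearIndependent ℂ (w m) := by
  apply LinearIndependent.of_comp (LinearMap.funLeft ℂ ℂ Fin.castSucc)
  have hcomp : (LinearMap.funLeft ℂ ℂ Fin.castSucc) ∘ w m = fun j => Pi.single j (1:ℂ) := by
    funext j k
    simp [w, LinearMap.funLeft, Pi.single_apply, Fin.castSucc_inj, (Fin.castSucc_lt_last _).ne]
  rw [hcomp]
  have h := (Pi.basisFun ℂ (Fin m)).linearIndependent
  have : ⇑(Pi.basisFun ℂ (Fin m)) = fun j => Pi.single j (1:ℂ) := by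
    funext j; simp
  rwa [this] at h

lemma e_not_mem_span_w (m : ℕ) (i : Fin (m+1)) : e m i ∉ span ℂ (Set.range (w m)) := by
  intro h
  have hle : span ℂ (Set.range (w m)) ≤ LinearMap.ker (φ₀ m) := by
    rw [span_le]
    rintro _ ⟨j, rfl⟩
    exact φ₀_w m j
  exact φ₀_e m i (hle h)

lemma snoc_li_we (m : ℕ) (i : Fin (m+1)) :
    LinearIndependent ℂ (Fin.snoc (w m) (e m i) : Fin (m+1) → Fin (m+1) → ℂ) :=
  linearIndependent_fin_snoc.mpr ⟨w_li m, e_not_mem_span_w m i⟩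

lemma finrank_span_w (m : ℕ) : finrank ℂ (span ℂ (Set.range (w m))) = m := by
  rw [finrank_span_eq_card (w_li m)]
  simp


abbrev X (m : ℕ) : Type :=
  ∀ i : Fin (L m).length, Matrix (Fin (m+1)) (Fin ((L m).get i)) ℂ

lemma get_emb_pos (m : ℕ) (i : Fin (m+1)) : 0 < (L m).get (emb m i) := by
  rw [get_lt m _ (by exact i.2)]; norm_num

def vcol (m : ℕ) (g : X m) (i : Fin (m+1)) : Fin (m+1) → ℂ :=
  fun r => g (emb m i) r ⟨0, get_emb_pos m i⟩

def bcol (m : ℕ) (g : X m) (j : Fin m) : Fin (m+1) → ℂ :=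
  fun r => g (lastIdx m) r ⟨j, by rw [get_lastIdx]; exact j.2⟩

def Vmat (m : ℕ) (g : X m) : Matrix (Fin (m+1)) (Fin (m+1)) ℂ :=
  Matrix.of fun r c => vcol m g c r

def Cmat (m : ℕ) (g : X m) (i : Fin (m+1)) : Matrix (Fin (m+1)) (Fin (m+1)) ℂ :=
  Matrix.of fun r c => (Fin.snoc (bcol m g) (vcol m g i) : Fin (m+1) → Fin (m+1) → ℂ) c r

def z' (m : ℕ) : X m := fun i => Matrix.of fun r c =>
  if h : (i : ℕ) < m + 1 then e m ⟨i, h⟩ r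
  else if hc : (c : ℕ) < m then w m ⟨c, hc⟩ r else 0

lemma vcol_z' (m : ℕ) (i : Fin (m+1)) : vcol m (z' m) i = e m i := by
  funext r
  have : ((emb m i : Fin (L m).length) : ℕ) < m + 1 := i.2
  simp only [vcol, z', Matrix.of_apply, dif_pos this]
  congr 1

lemma bcol_z' (m : ℕ) : bcol m (z' m) = w m := by
  funext j r
  have h1 : ¬ ((lastIdx m : Fin (L m).length) : ℕ) < m + 1 := by simp [lastIdx]
  simp only [bcol, z', Matrix.of_apply, dif_neg h1, dif_pos (show (j:ℕ) < m from j.2)]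


def pathX (m : ℕ) (a : X m) (s : ℂ) : X m := fun i => a i + s • (z' m i - a i)

lemma pathX_apply (m : ℕ) (a : X m) (s : ℂ) (i : Fin (L m).length) (r : Fin (m+1))
    (c : Fin ((L m).get i)) :
    pathX m a s i r c = a i r c + s * (z' m i r c - a i r c) := by
  simp [pathX, Matrix.add_apply, Matrix.smul_apply, Matrix.sub_apply, smul_eq_mul]

lemma vcol_pathX (m : ℕ) (a : X m) (s : ℂ) (i : Fin (m+1)) (r : Fin (m+1)) :
    vcol m (pathX m a s) i r = vcol m a i r + s * (vcol m (z' m) i r - vcol m a i r) := by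
  simp [vcol, pathX_apply]

lemma bcol_pathX (m : ℕ) (a : X m) (s : ℂ) (j : Fin m) (r : Fin (m+1)) :
    bcol m (pathX m a s) j r = bcol m a j r + s * (bcol m (z' m) j r - bcol m a j r) := by
  simp [bcol, pathX_apply]

lemma Vmat_pathX (m : ℕ) (a : X m) (s : ℂ) (r c : Fin (m+1)) :
    Vmat m (pathX m a s) r c
      = Vmat m a r c + s * (Vmat m (z' m) r c - Vmat m a r c) := by
  simp [Vmat, vcol_pathX]

lemma Cmat_pathX (m : ℕ) (a : X m) (s : ℂ) (i : Fin (m+1)) (r c : Fin (m+1)) :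
    Cmat m (pathX m a s) i r c
      = Cmat m a i r c + s * (Cmat m (z' m) i r c - Cmat m a i r c) := by
  induction c using Fin.lastCases with
  | last => simp [Cmat, Fin.snoc_last, vcol_pathX]
  | cast k => simp [Cmat, Fin.snoc_castSucc, bcol_pathX]

def Qv (m : ℕ) (a : X m) : Matrix (Fin (m+1)) (Fin (m+1)) ℂ[X] :=
  Matrix.of fun r c =>
    C (Vmat m a r c) + C (Vmat m (z' m) r c - Vmat m a r c) * Polynomial.X

def Qc (m : ℕ) (a : X m) (i : Fin (m+1)) : Matrix (Fin (m+1)) (Fin (m+1)) ℂ[X] :=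
  Matrix.of fun r c =>
    C (Cmat m a i r c) + C (Cmat m (z' m) i r c - Cmat m a i r c) * Polynomial.X

def Q (m : ℕ) (a : X m) : ℂ[X] :=
  (Qv m a).det * ∏ i : Fin (m+1), (Qc m a i).det

lemma map_Qv (m : ℕ) (a : X m) (s : ℂ) :
    (Qv m a).map (evalRingHom s) = Vmat m (pathX m a s) := by
  ext r c
  simp [Qv, Matrix.map_apply, Vmat_pathX]
  ring

lemma map_Qc (m : ℕ) (a : X m) (i : Fin (m+1)) (s : ℂ) :
    (Qc m a i).map (evalRingHom s) = Cmat m (pathX m a s) i := by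
  ext r c
  simp [Qc, Matrix.map_apply, Cmat_pathX]
  ring

lemma eval_Q (m : ℕ) (a : X m) (s : ℂ) :
    (Q m a).eval s
      = (Vmat m (pathX m a s)).det * ∏ i : Fin (m+1), (Cmat m (pathX m a s) i).det := by
  have h1 : (Q m a).eval s = (evalRingHom s) (Q m a) := rfl
  rw [h1, Q, _root_.map_mul, map_prod]
  rw [RingHom.map_det, RingHom.mapMatrix_apply, map_Qv]
  congr 1
  refine Finset.prod_congr rfl fun i _ => ?_
  rw [RingHom.map_det, RingHom.mapMatrix_apply, map_Qc]

lemma pathX_zero (m : ℕ) (a : X m) : pathX m a 0 = a := by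
  funext i; simp [pathX]

lemma pathX_one (m : ℕ) (a : X m) : pathX m a 1 = z' m := by
  funext i; simp [pathX]

lemma Vmat_z' (m : ℕ) : Vmat m (z' m) = 1 := by
  ext r c
  simp [Vmat, vcol_z', e, Matrix.one_apply, Pi.single_apply]

lemma cols_Cmat (m : ℕ) (g : X m) (i : Fin (m+1)) :
    (fun c => (Cmat m g i)ᵀ c)
      = (Fin.snoc (bcol m g) (vcol m g i) : Fin (m+1) → Fin (m+1) → ℂ) := by
  funext c r
  rfl

lemma det_Cmat_ne_zero_iff (m : ℕ) (g : X m) (i : Fin (m+1)) :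
    (Cmat m g i).det ≠ 0 ↔
      LinearIndependent ℂ (Fin.snoc (bcol m g) (vcol m g i) : Fin (m+1) → Fin (m+1) → ℂ) := by
  rw [← cols_Cmat]
  rw [show (fun c => (Cmat m g i)ᵀ c) = (Cmat m g i).col from rfl,
    Matrix.linearIndependent_cols_iff_isUnit (A := Cmat m g i)]
  rw [Matrix.isUnit_iff_isUnit_det, isUnit_iff_ne_zero]

lemma cols_Vmat (m : ℕ) (g : X m) :
    (fun c => (Vmat m g)ᵀ c) = vcol m g := by
  funext c r
  rfl

lemma det_Vmat_ne_zero_iff (m : ℕ) (g : X m) :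
    (Vmat m g).det ≠ 0 ↔ LinearIndependent ℂ (vcol m g) := by
  rw [← cols_Vmat]
  rw [show (fun c => (Vmat m g)ᵀ c) = (Vmat m g).col from rfl,
    Matrix.linearIndependent_cols_iff_isUnit (A := Vmat m g)]
  rw [Matrix.isUnit_iff_isUnit_det, isUnit_iff_ne_zero]

lemma Q_ne_zero (m : ℕ) (a : X m) : Q m a ≠ 0 := by
  intro h
  have h1 : (Q m a).eval 1 = 0 := by rw [h]; simp
  rw [eval_Q, pathX_one] at h1
  rcases mul_eq_zero.mp h1 with h2 | h2
  · rw [Vmat_z'] at h2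
    simp at h2
  · obtain ⟨i, -, h3⟩ := Finset.prod_eq_zero_iff.mp h2
    have h4 : (Cmat m (z' m) i).det ≠ 0 := by
      rw [det_Cmat_ne_zero_iff, bcol_z', vcol_z']
      exact snoc_li_we m i
    exact h4 h3


lemma continuous_pathR (m : ℕ) (a : X m) :
    Continuous (fun t : ℝ => pathX m a (t : ℂ)) := by
  apply continuous_pi
  intro i
  show Continuous fun t : ℝ => a i + (t:ℂ) • (z' m i - a i)
  exact continuous_const.add ((Complex.continuous_ofReal).smul continuous_const)

lemma exists_good (m : ℕ) (a : X m) (W : Set (X m)) (hW : IsOpen W) (ha : a ∈ W) :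
    ∃ g ∈ W, (Vmat m g).det ≠ 0 ∧ ∀ i, (Cmat m g i).det ≠ 0 := by
  set T : Set ℝ := (fun t : ℝ => pathX m a (t : ℂ)) ⁻¹' W with hT
  have hTnhds : T ∈ nhds (0 : ℝ) := by
    apply (hW.preimage (continuous_pathR m a)).mem_nhds
    show pathX m a ((0:ℝ) : ℂ) ∈ W
    rw [Complex.ofReal_zero, pathX_zero]
    exact ha
  set Bad : Set ℝ := {t : ℝ | (Q m a).eval (t : ℂ) = 0} with hBad
  have hBadFin : Bad.Finite := by
    have h1 : Set.Finite {s : ℂ | (Q m a).IsRoot s} := finite_setOf_isRoot (Q_ne_zero m a)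
    have h2 : Bad ⊆ (fun t : ℝ => (t : ℂ)) ⁻¹' {s : ℂ | (Q m a).IsRoot s} := fun t ht => ht
    exact Set.Finite.subset (Set.Finite.preimage (Complex.ofReal_injective.injOn) h1) h2
  have hcl : (Bad \ {0})ᶜ ∈ nhds (0 : ℝ) := by
    apply ((hBadFin.diff).isClosed).isOpen_compl.mem_nhds
    simp
  have hmem : (T ∩ (Bad \ {0})ᶜ) \ {0} ∈ nhdsWithin (0:ℝ) {(0:ℝ)}ᶜ := by
    apply Filter.inter_mem
    · exact nhdsWithin_le_nhds (Filter.inter_mem hTnhds hcl)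
    · exact self_mem_nhdsWithin
  obtain ⟨t, ⟨⟨htT, htB⟩, ht0⟩⟩ := Filter.nonempty_of_mem hmem
  have htBad : t ∉ Bad := by
    intro h
    exact htB ⟨h, ht0⟩
  refine ⟨pathX m a (t : ℂ), htT, ?_, ?_⟩
  · intro h
    apply htBad
    show (Q m a).eval (t:ℂ) = 0
    rw [eval_Q, h, zero_mul]
  · intro i h
    apply htBad
    show (Q m a).eval (t:ℂ) = 0
    rw [eval_Q]
    apply mul_eq_zero_of_right
    exact Finset.prod_eq_zero (Finset.mem_univ i) h

lemma range_transpose_emb (m : ℕ) (g : X m) (i : Fin (m+1)) :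
    Set.range (g (emb m i))ᵀ = {vcol m g i} := by
  ext y
  constructor
  · rintro ⟨c, rfl⟩
    have hc : c = ⟨0, get_emb_pos m i⟩ := by
      apply Fin.ext
      show (c:ℕ) = 0
      have h2 := c.2
      have h3 : (L m).get (emb m i) = 1 := get_lt m (emb m i) i.2
      omega
    subst hc
    rfl
  · rintro rfl
    exact ⟨⟨0, get_emb_pos m i⟩, rfl⟩

lemma range_transpose_last (m : ℕ) (g : X m) :
    Set.range (g (lastIdx m))ᵀ = Set.range (bcol m g) := by
  ext y
  constructor
  · rintro ⟨c, rfl⟩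
    have hc : (c : ℕ) < m := by
      have h2 := c.2
      have h3 : (L m).get (lastIdx m) = m := get_lastIdx m
      omega
    exact ⟨⟨c, hc⟩, by funext r; show g (lastIdx m) r _ = g (lastIdx m) r c; congr 1⟩
  · rintro ⟨j, rfl⟩
    exact ⟨⟨j, by rw [get_lastIdx]; exact j.2⟩, rfl⟩

lemma rank_emb (m : ℕ) (g : X m) (i : Fin (m+1)) (hv : vcol m g i ≠ 0) :
    (g (emb m i)).rank = (L m).get (emb m i) := by
  rw [Matrix.rank_eq_finrank_span_cols,
    show range (g (emb m i)).col = range (g (emb m i))ᵀ from rfl, range_transpose_emb, get_lt m _ (by exact i.2)]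
  exact finrank_span_singleton hv

lemma rank_last (m : ℕ) (g : X m) (h : LinearIndependent ℂ (bcol m g)) :
    (g (lastIdx m)).rank = (L m).get (lastIdx m) := by
  rw [Matrix.rank_eq_finrank_span_cols,
    show range (g (lastIdx m)).col = range (g (lastIdx m))ᵀ from rfl, range_transpose_last, get_lastIdx]
  rw [finrank_span_eq_card h]
  simp


lemma finrank_ker_eq (m : ℕ) (f : (Fin (m+1) → ℂ) →ₗ[ℂ] ℂ) (hf : f ≠ 0) :
    finrank ℂ (LinearMap.ker f) = m := by
  have h1 := LinearMap.finrank_range_add_finrank_ker f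
  have h2 : finrank ℂ (Fin (m+1) → ℂ) = m + 1 := by simp
  have h3 : LinearMap.range f ≠ ⊥ := by
    simp only [ne_eq, LinearMap.range_eq_bot]
    exact hf
  have h4 : finrank ℂ (LinearMap.range f) ≤ 1 := by
    have := Submodule.finrank_le (LinearMap.range f)
    simpa using this
  have h5 : finrank ℂ (LinearMap.range f) ≠ 0 := by
    intro h
    exact h3 (Submodule.finrank_eq_zero.mp h)
  omega

lemma orbit_hit (m : ℕ) (g : X m)
    (hdV : (Vmat m g).det ≠ 0) (hdC : ∀ i, (Cmat m g i).det ≠ 0) :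
    ∃ M : GL (Fin (m+1)) ℂ,
      (∀ i : Fin (m+1),
        Submodule.map (glEquiv M).toLinearMap (span ℂ {e m i})
          = LinearMap.range (g (emb m i)).mulVecLin) ∧
      Submodule.map (glEquiv M).toLinearMap (span ℂ (Set.range (w m)))
        = LinearMap.range (g (lastIdx m)).mulVecLin := by
  classical
  have hliv : LinearIndependent ℂ (vcol m g) := (det_Vmat_ne_zero_iff m g).mp hdV
  have hsnoc := fun i => linearIndependent_fin_snoc.mp ((det_Cmat_ne_zero_iff m g i).mp (hdC i))
  have hlib : LinearIndependent ℂ (bcol m g) := (hsnoc 0).1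
  have hnm : ∀ i, vcol m g i ∉ span ℂ (Set.range (bcol m g)) := fun i => (hsnoc i).2
  set K : Submodule ℂ (Fin (m+1) → ℂ) := span ℂ (Set.range (bcol m g)) with hK
  obtain ⟨f, hf0, hfbot⟩ := Submodule.exists_dual_map_eq_bot_of_notMem (hnm 0) inferInstance
  have hKle : K ≤ LinearMap.ker f := by
    intro x hx
    have : f x ∈ K.map f := Submodule.mem_map_of_mem hx
    rw [hfbot] at this
    simpa using this
  have hfne : f ≠ 0 := by
    intro h
    rw [h] at hf0
    simp at hf0
  have hfinK : finrank ℂ K = m := by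
    rw [hK, finrank_span_eq_card hlib]
    simp
  have hKker : K = LinearMap.ker f := by
    apply Submodule.eq_of_le_of_finrank_eq hKle
    rw [hfinK, finrank_ker_eq m f hfne]
  have hfv : ∀ i, f (vcol m g i) ≠ 0 := by
    intro i h
    exact hnm i (hKker ▸ (LinearMap.mem_ker.mpr h))
  set tc : Fin (m+1) → ℂ := fun i =>
    if i = Fin.last m then (f (vcol m g (Fin.last m)))⁻¹ else -(f (vcol m g i))⁻¹ with htc
  have htcne : ∀ i, tc i ≠ 0 := by
    intro i
    rw [htc]
    by_cases h : i = Fin.last m <;> simp [h, hfv _]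
  set Mmat : Matrix (Fin (m+1)) (Fin (m+1)) ℂ := Matrix.of fun r c => tc c * vcol m g c r
    with hMmat
  have hcolsM : (fun c => Mmatᵀ c) = fun c => tc c • vcol m g c := by
    funext c r
    rfl
  have hliM : LinearIndependent ℂ (fun c => Mmatᵀ c) := by
    rw [hcolsM]
    have := hliv.units_smul (fun c => Units.mk0 (tc c) (htcne c))
    convert this using 1
    funext c; rfl
  have hMunit : IsUnit Mmat := Matrix.linearIndependent_cols_iff_isUnit.mp hliM
  have hglE : ∀ v, (glEquiv hMunit.unit).toLinearMap v = Mmat.mulVec v := by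
    intro v
    show glEquiv hMunit.unit v = _
    rw [glEquiv, LinearMap.GeneralLinearGroup.coeFn_generalLinearEquiv]
    have h1 : (Matrix.GeneralLinearGroup.toLin hMunit.unit :
          (Fin (m+1) → ℂ) →ₗ[ℂ] (Fin (m+1) → ℂ))
        = Matrix.mulVecLin (hMunit.unit : Matrix (Fin (m+1)) (Fin (m+1)) ℂ) :=
      Matrix.GeneralLinearGroup.coe_toLin _
    have h2 : ((Matrix.GeneralLinearGroup.toLin hMunit.unit :
          LinearMap.GeneralLinearGroup ℂ (Fin (m+1) → ℂ)) : (Fin (m+1) → ℂ) → (Fin (m+1) → ℂ)) v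
        = Matrix.mulVecLin (hMunit.unit : Matrix (Fin (m+1)) (Fin (m+1)) ℂ) v := by
      rw [← h1]; rfl
    refine h2.trans ((congrArg (fun A => Matrix.mulVecLin A v) hMunit.unit_spec).trans ?_)
    rfl
  have hMe : ∀ i, (glEquiv hMunit.unit).toLinearMap (e m i) = tc i • vcol m g i := by
    intro i
    rw [hglE]
    show Mmat *ᵥ Pi.single i 1 = _
    rw [Matrix.mulVec_single_one]
    funext r
    rfl
  refine ⟨hMunit.unit, ?_, ?_⟩
  · intro i
    rw [Submodule.map_span, Set.image_singleton, hMe i, Matrix.range_mulVecLin,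
        show range (g (emb m i)).col = range (g (emb m i))ᵀ from rfl, range_transpose_emb]
    exact Submodule.span_singleton_smul_eq (IsUnit.mk0 _ (htcne i)) _
  · have hMw : ∀ j : Fin m, (glEquiv hMunit.unit).toLinearMap (w m j)
        = tc j.castSucc • vcol m g j.castSucc + tc (Fin.last m) • vcol m g (Fin.last m) := by
      intro j
      rw [hglE]
      show Mmat *ᵥ (Pi.single j.castSucc 1 + Pi.single (Fin.last m) 1) = _
      rw [Matrix.mulVec_add, Matrix.mulVec_single_one, Matrix.mulVec_single_one]
      funext r
      rfl
    have hker : ∀ j : Fin m, f ((glEquiv hMunit.unit).toLinearMap (w m j)) = 0 := by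
      intro j
      rw [hMw, map_add, LinearMap.map_smul, LinearMap.map_smul]
      have hne : j.castSucc ≠ Fin.last m := (Fin.castSucc_lt_last j).ne
      have e1 : tc j.castSucc = -(f (vcol m g j.castSucc))⁻¹ := by rw [htc]; simp [hne]
      have e2 : tc (Fin.last m) = (f (vcol m g (Fin.last m)))⁻¹ := by rw [htc]; simp
      rw [e1, e2, smul_eq_mul, smul_eq_mul, neg_mul,
        inv_mul_cancel₀ (hfv _), inv_mul_cancel₀ (hfv _)]
      ring
    have hle : Submodule.map (glEquiv hMunit.unit).toLinearMap (span ℂ (Set.range (w m)))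
        ≤ LinearMap.ker f := by
      rw [Submodule.map_span, span_le]
      rintro _ ⟨_, ⟨j, rfl⟩, rfl⟩
      exact LinearMap.mem_ker.mpr (hker j)
    have heq : Submodule.map (glEquiv hMunit.unit).toLinearMap (span ℂ (Set.range (w m)))
        = LinearMap.ker f := by
      apply Submodule.eq_of_le_of_finrank_eq hle
      rw [LinearEquiv.finrank_map_eq, finrank_span_w m, finrank_ker_eq m f hfne]
    rw [heq, ← hKker, hK, Matrix.range_mulVecLin,
      show range (g (lastIdx m)).col = range (g (lastIdx m))ᵀ from rfl, range_transpose_last]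


lemma colSpan_surjective (n d : ℕ) : Function.Surjective (colSpan n d) := by
  rintro ⟨U, hU⟩
  let b : Basis (Fin d) ℂ U := Module.finBasisOfFinrankEq ℂ U hU
  set A : Matrix (Fin n) (Fin d) ℂ := Matrix.of fun r c => (b c : Fin n → ℂ) r with hA
  have hAT : Set.range Aᵀ = Subtype.val '' Set.range b := by
    rw [← Set.range_comp]
    rfl
  have hspan : span ℂ (Set.range Aᵀ) = U := by
    rw [hAT]
    have h1 : (Subtype.val '' Set.range b : Set (Fin n → ℂ)) = U.subtype '' Set.range b := rfl
    rw [h1, Submodule.span_image, Basis.span_eq, Submodule.map_subtype_top]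
  refine ⟨⟨A, ?_⟩, ?_⟩
  · rw [Matrix.rank_eq_finrank_span_cols, show range A.col = range Aᵀ from rfl, hspan, hU]
  · apply Subtype.ext
    show LinearMap.range A.mulVecLin = U
    rw [Matrix.range_mulVecLin, show range A.col = range Aᵀ from rfl, hspan]

lemma pi_subtype_inducing {ι : Type*} {Y : ι → Type*} [∀ i, TopologicalSpace (Y i)]
    (p : ∀ i, Y i → Prop) :
    IsInducing (fun (f : ∀ i, Subtype (p i)) (i : ι) => (f i : Y i)) := by
  constructor
  rw [induced_to_pi]
  simp_rw [Pi.topologicalSpace, instTopologicalSpaceSubtype, induced_compose]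
  rfl

lemma frm_inducing (m : ℕ) :
    IsInducing (fun (A : ∀ i : Fin (L m).length, FullRankMatrices (m+1) ((L m).get i))
      (i : Fin (L m).length) => (A i).1) :=
  pi_subtype_inducing (fun (i : Fin (L m).length)
    (A : Matrix (Fin (m+1)) (Fin ((L m).get i)) ℂ) => A.rank = (L m).get i)

def Phi (m : ℕ) : (∀ i : Fin (L m).length, FullRankMatrices (m+1) ((L m).get i))
    → (∀ i : Fin (L m).length, Gr ((L m).get i) (m+1)) :=
  fun A i => colSpan (m+1) ((L m).get i) (A i)

lemma continuous_Phi (m : ℕ) : Continuous (Phi m) := by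
  apply continuous_pi
  intro i
  exact continuous_coinduced_rng.comp (continuous_apply i)

end DenseAux
end

open DenseAux Module Submodule Set Polynomial Matrix Topology in
/-- the dimension vector `(1^n, n-1; n)` is dense for `n ≥ 2`. -/
theorem dense_ones_hyperplane (n : ℕ) (hn : 2 ≤ n) :
    DenseDV (List.replicate n 1 ++ [n - 1]) n := by
  classical
  obtain ⟨m, rfl⟩ : ∃ m, n = m + 1 := ⟨n - 1, by omega⟩
  show DenseDV (L m) (m + 1)
  refine ⟨fun i => if h : (i : ℕ) < m + 1
      then ⟨span ℂ {e m ⟨i, h⟩}, by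
        rw [get_lt m i h]
        exact finrank_span_singleton (e_ne_zero m _)⟩
      else ⟨span ℂ (Set.range (w m)), by
        rw [eq_lastIdx m i h, get_lastIdx]
        exact finrank_span_w m⟩, ?_⟩
  rw [dense_iff_inter_open]
  intro U hU hUne
  obtain ⟨y₀, hy₀⟩ := hUne
  choose sec hsec using fun i => colSpan_surjective (m+1) ((L m).get i) (y₀ i)
  have hsecV : sec ∈ Phi m ⁻¹' U := by
    show Phi m sec ∈ U
    have h1 : Phi m sec = y₀ := funext hsec
    rw [h1]; exact hy₀
  obtain ⟨W, hWopen, hVW⟩ := (frm_inducing m).isOpen_iff.mp (hU.preimage (continuous_Phi m))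
  have haW : (fun i => (sec i).1) ∈ W := by
    rw [← hVW] at hsecV
    exact hsecV
  obtain ⟨g, hgW, hgV, hgC⟩ := exists_good m _ W hWopen haW
  have hrank : ∀ i, (g i).rank = (L m).get i := by
    intro i
    by_cases h : (i : ℕ) < m + 1
    · have hvne : vcol m g ⟨i, h⟩ ≠ 0 :=
        ((det_Vmat_ne_zero_iff m g).mp hgV).ne_zero ⟨i, h⟩
      have h2 := rank_emb m g ⟨i, h⟩ hvne
      have hemb : emb m ⟨i, h⟩ = i := Fin.ext rfl
      rwa [hemb] at h2
    · rw [eq_lastIdx m i h]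
      exact rank_last m g
        ((linearIndependent_fin_snoc.mp ((det_Cmat_ne_zero_iff m g 0).mp (hgC 0))).1)
  have hA₁U : Phi m (fun i => ⟨g i, hrank i⟩) ∈ U := by
    have h2 : (fun i => (⟨g i, hrank i⟩ : FullRankMatrices (m+1) ((L m).get i)))
        ∈ Phi m ⁻¹' U := by
      rw [← hVW]
      exact hgW
    exact h2
  obtain ⟨M, hM1, hM2⟩ := orbit_hit m g hgV hgC
  refine ⟨Phi m (fun i => ⟨g i, hrank i⟩), hA₁U, M, ?_⟩
  funext i
  apply Subtype.ext
  by_cases h : (i : ℕ) < m + 1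
  · dsimp only
    erw [dif_pos h]
    show Submodule.map (glEquiv M).toLinearMap (span ℂ {e m ⟨i, h⟩})
      = LinearMap.range (g i).mulVecLin
    have h2 := hM1 ⟨i, h⟩
    have hemb : emb m ⟨i, h⟩ = i := Fin.ext rfl
    rwa [hemb] at h2
  · dsimp only
    erw [dif_neg h]
    show Submodule.map (glEquiv M).toLinearMap (span ℂ (Set.range (w m)))
      = LinearMap.range (g i).mulVecLin
    have h2 := hM2
    rwa [eq_lastIdx m i h]
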